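/- Let p be a prime and let a ∈ K_p be the p-ary adding machine (odometer). Then for every n ≥ 0, the image of U_{n+1} under the linear map f ↦ f ∘ a⁻¹ − f equals U_n. -/

import Mathlib

/-- The Kaloujnine monomial `e_n(x) = Π_i x_i^{k_i}`, where `k_0, k_1, …` are the base-`p`
digits of `n`. -/
def kalMonomial (p n : ℕ) : (ℕ → ZMod p) → ZMod p :=
  fun x => ∏ i ∈ Finset.range (n + 1), x i ^ (n / p ^ i % p)

/-- `U_n`: the `ZMod p`-linear span of the monomials `e_0, e_1, …, e_n`. -/
def Uspan (p n : ℕ) : Submodule (ZMod p) ((ℕ → ZMod p) → ZMod p) :=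
  Submodule.span (ZMod p) (kalMonomial p '' {m : ℕ | m ≤ n})

def aInv (p : ℕ) (y : ℕ → ZMod p) : ℕ → ZMod p :=
  fun i => if ∀ j ≤ i, y j = 0 then -1
           else if ∀ j < i, y j = 0 then y i - 1 else y i

lemma aInv_zero (p : ℕ) (y : ℕ → ZMod p) (h : y 0 = 0) :
    aInv p y 0 = -1 ∧ (fun i => aInv p y (i+1)) = aInv p (fun i => y (i+1)) := by
  constructor
  · simp only [aInv]
    rw [if_pos]
    intro j hj
    interval_cases j
    exact h
  · funext i
    simp only [aInv]
    have h1 : (∀ j ≤ i + 1, y j = 0) ↔ (∀ j ≤ i, y (j+1) = 0) := by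
      constructor
      · intro H j hj; exact H (j+1) (by omega)
      · intro H j hj
        rcases Nat.eq_zero_or_pos j with rfl | hj0
        · exact h
        · obtain ⟨k, rfl⟩ := Nat.exists_eq_succ_of_ne_zero (by omega : j ≠ 0)
          exact H k (by omega)
    have h2 : (∀ j < i + 1, y j = 0) ↔ (∀ j < i, y (j+1) = 0) := by
      constructor
      · intro H j hj; exact H (j+1) (by omega)
      · intro H j hj
        rcases Nat.eq_zero_or_pos j with rfl | hj0
        · exact h
        · obtain ⟨k, rfl⟩ := Nat.exists_eq_succ_of_ne_zero (by omega : j ≠ 0)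
          exact H k (by omega)
    simp only [h1, h2]

lemma aInv_ne_zero (p : ℕ) (y : ℕ → ZMod p) (h : y 0 ≠ 0) :
    aInv p y 0 = y 0 - 1 ∧ (fun i => aInv p y (i+1)) = fun i => y (i+1) := by
  constructor
  · simp only [aInv]
    rw [if_neg, if_pos]
    · intro j hj; omega
    · intro H; exact h (H 0 (by omega))
  · funext i
    simp only [aInv]
    rw [if_neg, if_neg]
    · intro H; exact h (H 0 (by omega))
    · intro H; exact h (H 0 (by omega))

lemma symm_eq_aInv (p : ℕ) (hp : p.Prime) (a : Equiv.Perm (ℕ → ZMod p))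
    (ha : ∀ (x : ℕ → ZMod p) (k : ℕ),
      (∀ i < k, x i = (p : ZMod p) - 1) → x k ≠ (p : ZMod p) - 1 →
      ((∀ i < k, a x i = 0) ∧ a x k = x k + 1 ∧ ∀ i, k < i → a x i = x i))
    (htop : a (fun _ => (p : ZMod p) - 1) = fun _ => 0) (y : ℕ → ZMod p) :
    a.symm y = aInv p y := by
  have hpcast : (p : ZMod p) - 1 = -1 := by rw [ZMod.natCast_self]; ring
  rw [Equiv.symm_apply_eq]
  by_cases hy : ∀ j, y j = 0
  · have : aInv p y = fun _ => (p : ZMod p) - 1 := by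
      funext i
      simp only [aInv, hpcast]
      rw [if_pos (fun j _ => hy j)]
    rw [this, htop]
    funext i; exact hy i
  · push_neg at hy
    set k := Nat.find hy with hkdef
    have hk : y k ≠ 0 := Nat.find_spec hy
    have hkmin : ∀ j < k, y j = 0 := by
      intro j hj
      by_contra hc
      exact absurd hj (not_lt.mpr (Nat.find_le hc))
    set x := aInv p y with hxdef
    have hx_lt : ∀ i < k, x i = (p : ZMod p) - 1 := by
      intro i hi
      simp only [hxdef, aInv, hpcast]
      rw [if_pos (fun j hj => hkmin j (by omega))]
    have hx_k : x k = y k - 1 := by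
      simp only [hxdef, aInv]
      rw [if_neg, if_pos hkmin]
      intro H; exact hk (H k le_rfl)
    have hx_gt : ∀ i, k < i → x i = y i := by
      intro i hi
      simp only [hxdef, aInv]
      rw [if_neg, if_neg]
      · intro H; exact hk (H k hi)
      · intro H; exact hk (H k (le_of_lt hi))
    have hxk_ne : x k ≠ (p : ZMod p) - 1 := by
      rw [hx_k, hpcast]
      intro H
      apply hk
      linear_combination H
    obtain ⟨h1, h2, h3⟩ := ha x k hx_lt hxk_ne
    funext i
    rcases lt_trichotomy i k with h | h | h
    · rw [h1 i h, hkmin i h]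
    · subst h; rw [h2, hx_k]; ring
    · rw [h3 i h, hx_gt i h]

lemma kal_zero (p : ℕ) : kalMonomial p 0 = fun _ => 1 := by
  funext x; simp [kalMonomial]

lemma digit_zero (p : ℕ) (hp : 2 ≤ p) (n i : ℕ) (hi : n + 1 ≤ i) : n / p ^ i % p = 0 := by
  have h1 : n < 2 ^ i := lt_of_lt_of_le (Nat.lt_two_pow_self (n := n)) (Nat.pow_le_pow_right (by omega) (by omega))
  have h2 : n < p ^ i := lt_of_lt_of_le h1 (Nat.pow_le_pow_left hp i)
  rw [Nat.div_eq_of_lt h2, Nat.zero_mod]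

/-- stability: can enlarge the range -/
lemma kal_range (p : ℕ) (hp : 2 ≤ p) (n L : ℕ) (hL : n + 1 ≤ L) (x : ℕ → ZMod p) :
    kalMonomial p n x = ∏ i ∈ Finset.range L, x i ^ (n / p ^ i % p) := by
  unfold kalMonomial
  apply Finset.prod_subset (Finset.range_subset_range.mpr hL)
  intro i _ hi
  simp only [Finset.mem_range, not_lt] at hi
  rw [digit_zero p hp n i hi, pow_zero]

lemma kal_split (p : ℕ) (hp : 2 ≤ p) (n : ℕ) (hn : n ≠ 0) (x : ℕ → ZMod p) :
    kalMonomial p n x = x 0 ^ (n % p) * kalMonomial p (n / p) (fun i => x (i + 1)) := by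
  have key : kalMonomial p n x
      = (∏ i ∈ Finset.range n, x (i+1) ^ (n / p ^ (i+1) % p)) * x 0 ^ (n / p ^ 0 % p) := by
    unfold kalMonomial
    exact Finset.prod_range_succ' (fun i => x i ^ (n / p ^ i % p)) n
  rw [key]
  simp only [pow_zero, Nat.div_one]
  rw [mul_comm]
  congr 1
  rw [kal_range p hp (n / p) n (by
    have := Nat.div_lt_self (Nat.pos_of_ne_zero hn) (by omega : 1 < p)
    omega) (fun i => x (i+1))]
  apply Finset.prod_congr rfl
  intro i _
  congr 2
  rw [Nat.div_div_eq_div_mul, pow_succ']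

lemma kal_merge (p : ℕ) (hp : 2 ≤ p) (j m : ℕ) (hj : j < p) (x : ℕ → ZMod p) :
    x 0 ^ j * kalMonomial p m (fun i => x (i + 1)) = kalMonomial p (j + p * m) x := by
  rcases Nat.eq_zero_or_pos (j + p * m) with h | h
  · have hj0 : j = 0 := by omega
    have hm0 : m = 0 := by
      rcases Nat.eq_zero_or_pos m with h' | h'
      · exact h'
      · exfalso; nlinarith
    subst hj0; subst hm0
    simp [kal_zero]
  · rw [kal_split p hp (j + p * m) h.ne' x]
    congr 2
    · rw [Nat.add_mul_mod_self_left, Nat.mod_eq_of_lt hj]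
    · rw [Nat.add_mul_div_left _ _ (by omega : 0 < p), Nat.div_eq_of_lt hj, Nat.zero_add]

def Usub (p k : ℕ) : Submodule (ZMod p) ((ℕ → ZMod p) → ZMod p) :=
  Submodule.span (ZMod p) (kalMonomial p '' {m : ℕ | m + 2 ≤ k})

lemma mem_Usub (p : ℕ) {m k : ℕ} (h : m + 2 ≤ k) : kalMonomial p m ∈ Usub p k :=
  Submodule.subset_span ⟨m, h, rfl⟩

lemma Usub_mono (p : ℕ) {k k' : ℕ} (h : k ≤ k') : Usub p k ≤ Usub p k' :=
  Submodule.span_mono (Set.image_mono fun m hm => le_trans hm h)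

def Phi (p : ℕ) : ((ℕ → ZMod p) → ZMod p) →ₗ[ZMod p] ((ℕ → ZMod p) → ZMod p) where
  toFun g := fun x => (1 - x 0 ^ (p - 1)) * g (fun i => x (i + 1))
  map_add' g h := by funext x; simp [mul_add]
  map_smul' c g := by
    funext x
    simp only [Pi.smul_apply, smul_eq_mul, RingHom.id_apply]
    ring

lemma Phi_kal (p : ℕ) (hp : 2 ≤ p) (k : ℕ) :
    Phi p (kalMonomial p k) = kalMonomial p (p * k) - kalMonomial p (p - 1 + p * k) := by
  funext x
  simp only [Phi, LinearMap.coe_mk, AddHom.coe_mk, Pi.sub_apply]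
  have h0 := kal_merge p hp 0 k (by omega) x
  rw [zero_add] at h0
  rw [← h0, ← kal_merge p hp (p-1) k (by omega) x]
  ring

lemma Phi_maps (p : ℕ) (hp : 2 ≤ p) {M N : ℕ}
    (hb : ∀ k, k + 2 ≤ M → p * k + 2 ≤ N ∧ p - 1 + p * k + 2 ≤ N)
    {g : (ℕ → ZMod p) → ZMod p} (hg : g ∈ Usub p M) : Phi p g ∈ Usub p N := by
  have h1 : Submodule.map (Phi p) (Usub p M) ≤ Usub p N := by
    rw [Usub, Submodule.map_span, Submodule.span_le]
    rintro y ⟨f, ⟨k, hk, rfl⟩, rfl⟩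
    rw [SetLike.mem_coe, Phi_kal p hp k]
    exact sub_mem (mem_Usub p (hb k hk).1) (mem_Usub p (hb k hk).2)
  exact h1 ⟨g, hg, rfl⟩

lemma q_expand (p : ℕ) (j : ℕ) (t : ZMod p) :
    (t - 1) ^ j - t ^ j
      = ∑ i ∈ Finset.range j, ((-1 : ZMod p) ^ (i + j) * (j.choose i)) * t ^ i := by
  have hsum : ∑ i ∈ Finset.range j, (-1 : ZMod p) ^ (i + j) * t ^ i * 1 ^ (j - i) * (j.choose i)
      = ∑ i ∈ Finset.range j, ((-1 : ZMod p) ^ (i + j) * (j.choose i)) * t ^ i :=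
    Finset.sum_congr rfl (fun i _ => by rw [one_pow]; ring)
  have hev : (-1 : ZMod p) ^ (j + j) = 1 := Even.neg_one_pow ⟨j, rfl⟩
  rw [sub_pow, Finset.sum_range_succ, hsum, hev]
  simp only [Nat.choose_self, Nat.cast_one, Nat.sub_self, pow_zero]
  ring

def Dop (p : ℕ) (f : (ℕ → ZMod p) → ZMod p) : (ℕ → ZMod p) → ZMod p :=
  fun x => f (aInv p x) - f x

lemma D_split (p : ℕ) (hp : p.Prime) (j : ℕ) (g : (ℕ → ZMod p) → ZMod p) (x : ℕ → ZMod p) :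
    Dop p (fun y => y 0 ^ j * g (fun i => y (i+1))) x
      = ((x 0 - 1) ^ j - x 0 ^ j) * g (fun i => x (i+1))
        + (-1 : ZMod p) ^ j * (1 - x 0 ^ (p - 1)) * Dop p g (fun i => x (i+1)) := by
  haveI : Fact p.Prime := ⟨hp⟩
  have hp2 : 2 ≤ p := hp.two_le
  simp only [Dop]
  by_cases h : x 0 = 0
  · obtain ⟨h0, htail⟩ := aInv_zero p x h
    rw [h0, htail, h]
    have hz : (0 : ZMod p) ^ (p - 1) = 0 := zero_pow (by omega)
    rw [hz, zero_sub]
    ring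
  · obtain ⟨h0, htail⟩ := aInv_ne_zero p x h
    rw [h0, htail]
    have h1 : (x 0) ^ (p - 1) = 1 := ZMod.pow_card_sub_one_eq_one h
    rw [h1]
    ring

lemma Dop_kal_zero (p : ℕ) : Dop p (kalMonomial p 0) = 0 := by
  funext x; simp [Dop, kal_zero]

lemma main (p : ℕ) (hp : p.Prime) : ∀ n : ℕ, ∃ c : ZMod p, c ≠ 0 ∧
    Dop p (kalMonomial p (n+1)) - c • kalMonomial p n ∈ Usub p (n+1) := by
  have hp2 : 2 ≤ p := hp.two_le
  intro n
  induction n using Nat.strong_induction_on with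
  | _ n IH =>
  obtain ⟨j, hjdef⟩ : ∃ j, j = (n+1) % p := ⟨_, rfl⟩
  obtain ⟨m, hmdef⟩ : ∃ m, m = (n+1) / p := ⟨_, rfl⟩
  have hjm : p * m + j = n + 1 := by rw [hjdef, hmdef]; exact Nat.div_add_mod (n+1) p
  have hjp : j < p := by rw [hjdef]; exact Nat.mod_lt _ (by omega)
  have hmle : m ≤ p * m := Nat.le_mul_of_pos_left m (by omega)
  -- D applied to e_m lies in span of e_0 .. e_{m-1}
  have hDm : m ≤ n → Dop p (kalMonomial p m) ∈ Usub p (m+1) := by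
    intro hmn
    match m with
    | 0 => rw [Dop_kal_zero]; exact zero_mem _
    | (k+1) =>
      obtain ⟨c', hc', hmem⟩ := IH k (by omega)
      have heq : Dop p (kalMonomial p (k+1))
          = (Dop p (kalMonomial p (k+1)) - c' • kalMonomial p k) + c' • kalMonomial p k := by
        abel
      rw [heq]
      exact add_mem (Usub_mono p (by omega) hmem)
        (Submodule.smul_mem _ _ (mem_Usub p (by omega)))
  -- the key pointwise formula
  have hfun : kalMonomial p (n+1) = fun y => y 0 ^ j * kalMonomial p m (fun i => y (i+1)) := by
    funext y
    rw [kal_split p hp2 (n+1) (Nat.succ_ne_zero n) y, ← hjdef, ← hmdef]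
  have hkey : ∀ x, Dop p (kalMonomial p (n+1)) x
      = ((x 0 - 1) ^ j - x 0 ^ j) * kalMonomial p m (fun i => x (i+1))
        + (-1 : ZMod p) ^ j * (1 - x 0 ^ (p-1)) * Dop p (kalMonomial p m) (fun i => x (i+1)) := by
    intro x
    rw [hfun]
    exact D_split p hp j _ x
  rcases Nat.eq_zero_or_pos j with hj0 | hj1
  · -- case j = 0 : n+1 = p*m
    subst hj0
    have hpm : p * m = n + 1 := by omega
    have hm1 : m ≠ 0 := by rintro rfl; omega
    obtain ⟨k, rfl⟩ : ∃ k, m = k + 1 := ⟨m - 1, by omega⟩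
    have hpk : p * (k+1) = p * k + p := by ring
    have hkn : k < n := by nlinarith
    obtain ⟨c', hc', hw⟩ := IH k hkn
    set w := Dop p (kalMonomial p (k+1)) - c' • kalMonomial p k with hwdef
    have hDeq : Dop p (kalMonomial p (n+1)) = Phi p (Dop p (kalMonomial p (k+1))) := by
      funext x
      rw [hkey x]
      simp only [pow_zero, sub_self, zero_mul, one_mul, zero_add,
        Phi, LinearMap.coe_mk, AddHom.coe_mk]
    have hn_eq : p - 1 + p * k = n := by omega
    refine ⟨-c', neg_ne_zero.mpr hc', ?_⟩
    have hsplit : Dop p (kalMonomial p (n+1)) - (-c') • kalMonomial p n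
        = Phi p w + c' • kalMonomial p (p * k) := by
      rw [hDeq]
      have heq2 : Dop p (kalMonomial p (k+1)) = w + c' • kalMonomial p k := by
        rw [hwdef]; abel
      rw [heq2, map_add, map_smul, Phi_kal p hp2 k, hn_eq]
      funext x
      simp only [Pi.add_apply, Pi.sub_apply, Pi.smul_apply, smul_eq_mul]
      ring
    rw [hsplit]
    apply add_mem
    · apply Phi_maps p hp2 (M := k+1) ?_ hw
      intro l hl
      have h1 : p * l + p ≤ p * k := by
        have h3 := Nat.mul_le_mul_left p (show l + 1 ≤ k by omega)
        calc p * l + p = p * (l+1) := by ring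
        _ ≤ p * k := h3
      omega
    · exact Submodule.smul_mem _ _ (mem_Usub p (by omega))
  · -- case j ≥ 1
    have hmn : m ≤ n := by omega
    obtain ⟨jp, rfl⟩ : ∃ jp, j = jp + 1 := ⟨j - 1, by omega⟩
    set S : (ℕ → ZMod p) → ZMod p :=
      ∑ i ∈ Finset.range (jp+1),
        ((-1 : ZMod p) ^ (i + (jp+1)) * ((jp+1).choose i)) • kalMonomial p (i + p * m)
      with hSdef
    have hPsi : Dop p (kalMonomial p (n+1))
        = S + (-1 : ZMod p) ^ (jp+1) • Phi p (Dop p (kalMonomial p m)) := by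
      funext x
      rw [Pi.add_apply, hkey x, q_expand]
      congr 1
      · rw [hSdef, Finset.sum_apply, Finset.sum_mul]
        apply Finset.sum_congr rfl
        intro i hi
        rw [Finset.mem_range] at hi
        rw [Pi.smul_apply, smul_eq_mul, ← kal_merge p hp2 i m (by omega) x]
        ring
      · rw [Pi.smul_apply, smul_eq_mul]
        simp only [Phi, LinearMap.coe_mk, AddHom.coe_mk]
        ring
    -- coefficient of the top term
    have htop : ((-1 : ZMod p) ^ (jp + (jp+1)) * (((jp+1).choose jp : ℕ) : ZMod p))
        = -(((jp+1 : ℕ) : ZMod p)) := by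
      have hodd : Odd (jp + (jp+1)) := ⟨jp, by omega⟩
      rw [hodd.neg_one_pow, Nat.choose_succ_self_right]
      ring
    have hidx : jp + p * m = n := by omega
    refine ⟨-(((jp+1 : ℕ) : ZMod p)), ?_, ?_⟩
    · rw [neg_ne_zero]
      intro h
      rw [ZMod.natCast_eq_zero_iff] at h
      exact absurd (Nat.le_of_dvd (by omega) h) (by omega)
    · have hSsplit : S = (∑ i ∈ Finset.range jp,
          ((-1 : ZMod p) ^ (i + (jp+1)) * ((jp+1).choose i)) • kalMonomial p (i + p * m))
          + (-(((jp+1 : ℕ) : ZMod p))) • kalMonomial p n := by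
        rw [hSdef, Finset.sum_range_succ, htop, hidx]
      have hfin : Dop p (kalMonomial p (n+1)) - (-(((jp+1 : ℕ) : ZMod p))) • kalMonomial p n
          = (∑ i ∈ Finset.range jp,
              ((-1 : ZMod p) ^ (i + (jp+1)) * ((jp+1).choose i)) • kalMonomial p (i + p * m))
            + (-1 : ZMod p) ^ (jp+1) • Phi p (Dop p (kalMonomial p m)) := by
        rw [hPsi, hSsplit]; abel
      rw [hfin]
      apply add_mem
      · apply Submodule.sum_mem
        intro i hi
        rw [Finset.mem_range] at hi
        exact Submodule.smul_mem _ _ (mem_Usub p (by omega))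
      · apply Submodule.smul_mem
        apply Phi_maps p hp2 (M := m+1) ?_ (hDm hmn)
        intro l hl
        have h1 : p * l + p ≤ p * m := by
          have h3 := Nat.mul_le_mul_left p (show l + 1 ≤ m by omega)
          calc p * l + p = p * (l+1) := by ring
          _ ≤ p * m := h3
        omega

def DLin (p : ℕ) : ((ℕ → ZMod p) → ZMod p) →ₗ[ZMod p] ((ℕ → ZMod p) → ZMod p) where
  toFun f := Dop p f
  map_add' f g := by funext x; simp [Dop]; abel
  map_smul' c f := by
    funext x
    simp only [Dop, Pi.smul_apply, smul_eq_mul, RingHom.id_apply]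
    ring

lemma Usub_le_Uspan (p : ℕ) {k n : ℕ} (h : k ≤ n + 2) : Usub p k ≤ Uspan p n :=
  Submodule.span_mono (Set.image_mono fun m hm => by simp only [Set.mem_setOf_eq] at *; omega)

/-- let `a` be the `p`-ary adding machine (odometer): it adds `1` with
carry, and maps the constant sequence `p−1` to the constant sequence `0`. Then for every
`n ≥ 0`, the image of `U_{n+1}` under the linear map `f ↦ f ∘ a⁻¹ − f` equals `U_n`. -/

theorem odometer_image_Uspan (p : ℕ) (hp : p.Prime)
    (a : Equiv.Perm (ℕ → ZMod p))
    (ha : ∀ (x : ℕ → ZMod p) (k : ℕ),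
      (∀ i < k, x i = (p : ZMod p) - 1) → x k ≠ (p : ZMod p) - 1 →
      ((∀ i < k, a x i = 0) ∧ a x k = x k + 1 ∧ ∀ i, k < i → a x i = x i))
    (htop : a (fun _ => (p : ZMod p) - 1) = fun _ => 0) :
    ∀ n : ℕ,
      (fun f : (ℕ → ZMod p) → ZMod p => fun x => f (a.symm x) - f x) ''
          (Uspan p (n + 1) : Set ((ℕ → ZMod p) → ZMod p)) =
        (Uspan p n : Set ((ℕ → ZMod p) → ZMod p)) := by
  intro n
  haveI : Fact p.Prime := ⟨hp⟩
  have hmapeq : (fun f : (ℕ → ZMod p) → ZMod p => fun x => f (a.symm x) - f x)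
      = fun f => DLin p f := by
    funext f x
    simp only [DLin, Dop, LinearMap.coe_mk, AddHom.coe_mk]
    rw [symm_eq_aInv p hp a ha htop x]
  rw [hmapeq]
  have himg : (fun f => DLin p f) '' (Uspan p (n+1) : Set _)
      = ↑(Submodule.map (DLin p) (Uspan p (n+1))) := by
    rw [Submodule.map_coe]
  rw [himg]
  have hsub : Submodule.map (DLin p) (Uspan p (n + 1)) = Uspan p n := by
    rw [Uspan, Submodule.map_span]
    apply le_antisymm
    · rw [Submodule.span_le]
      rintro _ ⟨_, ⟨k, hk, rfl⟩, rfl⟩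
      simp only [Set.mem_setOf_eq] at hk
      rw [SetLike.mem_coe]
      match k with
      | 0 =>
        have : DLin p (kalMonomial p 0) = 0 := Dop_kal_zero p
        rw [this]; exact zero_mem _
      | (l+1) =>
        obtain ⟨c, hc, hmem⟩ := main p hp l
        have heq : DLin p (kalMonomial p (l+1))
            = (Dop p (kalMonomial p (l+1)) - c • kalMonomial p l) + c • kalMonomial p l := by
          show Dop p (kalMonomial p (l+1)) = _
          abel
        rw [heq]
        exact add_mem (Usub_le_Uspan p (by omega) hmem)
          (Submodule.smul_mem _ _ (Submodule.subset_span ⟨l, by simp only [Set.mem_setOf_eq]; omega, rfl⟩))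
    · have claim : ∀ k, k ≤ n → kalMonomial p k ∈
          Submodule.span (ZMod p) (DLin p '' (kalMonomial p '' {m : ℕ | m ≤ n + 1})) := by
        intro k
        induction k using Nat.strong_induction_on with
        | _ k IHk =>
        intro hk
        obtain ⟨c, hc, hmem⟩ := main p hp k
        have hT : DLin p (kalMonomial p (k+1)) ∈
            Submodule.span (ZMod p) (DLin p '' (kalMonomial p '' {m : ℕ | m ≤ n + 1})) :=
          Submodule.subset_span ⟨kalMonomial p (k+1), ⟨k+1, by simp only [Set.mem_setOf_eq]; omega, rfl⟩, rfl⟩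
        have husub : Dop p (kalMonomial p (k+1)) - c • kalMonomial p k ∈
            Submodule.span (ZMod p) (DLin p '' (kalMonomial p '' {m : ℕ | m ≤ n + 1})) := by
          apply Submodule.span_le.mpr ?_ hmem
          rintro _ ⟨l, hl, rfl⟩
          simp only [Set.mem_setOf_eq] at hl
          exact IHk l (by omega) (by omega)
        have hrepr : kalMonomial p k
            = c⁻¹ • (DLin p (kalMonomial p (k+1))
                - (Dop p (kalMonomial p (k+1)) - c • kalMonomial p k)) := by
          have h1 : DLin p (kalMonomial p (k+1)) = Dop p (kalMonomial p (k+1)) := rfl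
          rw [h1, sub_sub_cancel, smul_smul, inv_mul_cancel₀ hc, one_smul]
        rw [hrepr]
        exact Submodule.smul_mem _ _ (sub_mem hT husub)
      rw [Uspan, Submodule.span_le]
      rintro _ ⟨k, hk, rfl⟩
      exact claim k hk
  rw [hsub]
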